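/- Let f : \mathbb{R}^3 \setminus \Gamma \to \mathbb{R} be a nonnegative subharmonic function (\Delta f \ge 0) on the complement of the z-axis \Gamma, bounded on \mathbb{R}^3 \setminus \Gamma, with f(x) \to 0 as |x| \to \infty. Suppose in addition f extends continuously by 0 to \Gamma minus finitely many points, and f remains bounded near those points. Then f \equiv 0. -/

import Mathlib

open Filter Topology Set

noncomputable section

local notation "E3" => EuclideanSpace ℝ (Fin 3)

def qf (p x : E3) : ℝ := ∑ i, (x i - p i)^2

def Dq (p x : E3) : E3 →L[ℝ] ℝ :=
  ∑ i, (2 * (x i - p i)) • (EuclideanSpace.proj i : E3 →L[ℝ] ℝ)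

lemma Dq_apply (p x : E3) (j : Fin 3) :
    Dq p x (EuclideanSpace.single j 1) = 2 * (x j - p j) := by
  simp [Dq, ContinuousLinearMap.sum_apply, PiLp.proj_apply,
    EuclideanSpace.single_apply, Finset.sum_ite_eq]

lemma hasFDerivAt_qf (p x : E3) : HasFDerivAt (qf p) (Dq p x) x := by
  have : ∀ i : Fin 3, HasFDerivAt (fun y : E3 => (y i - p i)^2)
      ((2 * (x i - p i)) • (EuclideanSpace.proj i : E3 →L[ℝ] ℝ)) x := by
    intro i
    have h1 : HasFDerivAt (fun y : E3 => y i - p i)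
        (EuclideanSpace.proj i : E3 →L[ℝ] ℝ) x :=
      (EuclideanSpace.proj i : E3 →L[ℝ] ℝ).hasFDerivAt.sub_const (p i)
    have := h1.fun_mul h1
    have heq : (fun y : E3 => (y i - p i) * (y i - p i)) = fun y : E3 => (y i - p i)^2 := by
      funext y; ring
    rw [heq] at this
    refine this.congr_fderiv ?_
    refine ContinuousLinearMap.ext fun v => ?_
    simp only [ContinuousLinearMap.add_apply, ContinuousLinearMap.smul_apply, ContinuousLinearMap.neg_apply, smul_eq_mul]
    ring
  have hsum := HasFDerivAt.fun_sum (fun i (_ : i ∈ Finset.univ) => this i)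
  exact hsum

lemma qf_nonneg (p x : E3) : 0 ≤ qf p x := Finset.sum_nonneg fun i _ => sq_nonneg _

lemma qf_eq_norm (p x : E3) : qf p x = ‖x - p‖^2 := by
  rw [EuclideanSpace.norm_eq]
  rw [Real.sq_sqrt (by positivity)]
  simp [qf, sq_abs]

lemma qf_pos (p x : E3) (h : x ≠ p) : 0 < qf p x := by
  rw [qf_eq_norm]
  exact pow_pos (norm_pos_iff.mpr (sub_ne_zero_of_ne h)) 2

/-- barrier function 1/‖x-p‖ -/
def bar (p x : E3) : ℝ := qf p x ^ (-(1:ℝ)/2)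

lemma bar_nonneg (p x : E3) : 0 ≤ bar p x := Real.rpow_nonneg (qf_nonneg p x) _

lemma bar_eq_inv (p x : E3) : bar p x = ‖x - p‖⁻¹ := by
  rw [bar, qf_eq_norm, ← Real.rpow_natCast (‖x - p‖) 2, ← Real.rpow_mul (norm_nonneg _)]
  norm_num [Real.rpow_neg_one]

lemma bar_pos (p x : E3) (h : x ≠ p) : 0 < bar p x := by
  rw [bar_eq_inv]
  exact inv_pos.mpr (norm_pos_iff.mpr (sub_ne_zero_of_ne h))

lemma hasFDerivAt_bar (p x : E3) (h : x ≠ p) :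
    HasFDerivAt (bar p) ((-(1:ℝ)/2 * qf p x ^ (-(3:ℝ)/2)) • Dq p x) x := by
  have hq : qf p x ≠ 0 := ne_of_gt (qf_pos p x h)
  have hr := Real.hasDerivAt_rpow_const (x := qf p x) (p := -(1:ℝ)/2) (Or.inl hq)
  have := hr.comp_hasFDerivAt x (hasFDerivAt_qf p x)
  have he : (-(1:ℝ)/2 - 1) = -(3:ℝ)/2 := by norm_num
  rw [show -(1:ℝ)/2 - 1 = -(3:ℝ)/2 by norm_num] at this
  exact this

/-- explicit first directional derivative of the barrier -/
def barG (p : E3) (i : Fin 3) (x : E3) : ℝ := -(x i - p i) * qf p x ^ (-(3:ℝ)/2)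

lemma fderiv_bar_apply (p x : E3) (h : x ≠ p) (i : Fin 3) :
    fderiv ℝ (bar p) x (EuclideanSpace.single i 1) = barG p i x := by
  rw [(hasFDerivAt_bar p x h).fderiv]
  simp [Dq_apply, barG]
  ring

/-- second directional derivative of barG -/
lemma hasFDerivAt_barG (p x : E3) (h : x ≠ p) (i : Fin 3) :
    HasFDerivAt (barG p i)
      ((-(qf p x ^ (-(3:ℝ)/2))) • (EuclideanSpace.proj i : E3 →L[ℝ] ℝ)
        + (-(x i - p i) * (-(3:ℝ)/2 * qf p x ^ (-(5:ℝ)/2))) • Dq p x) x := by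
  have hq : qf p x ≠ 0 := ne_of_gt (qf_pos p x h)
  have h1 : HasFDerivAt (fun y : E3 => -(y i - p i))
      (-(EuclideanSpace.proj i : E3 →L[ℝ] ℝ)) x :=
    ((EuclideanSpace.proj i : E3 →L[ℝ] ℝ).hasFDerivAt.sub_const (p i)).neg
  have hr := Real.hasDerivAt_rpow_const (x := qf p x) (p := -(3:ℝ)/2) (Or.inl hq)
  have h2 : HasFDerivAt (fun y : E3 => qf p y ^ (-(3:ℝ)/2))
      ((-(3:ℝ)/2 * qf p x ^ (-(5:ℝ)/2)) • Dq p x) x := by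
    have := hr.comp_hasFDerivAt x (hasFDerivAt_qf p x)
    rw [show -(3:ℝ)/2 - 1 = -(5:ℝ)/2 by norm_num] at this
    exact this
  have := h1.fun_mul h2
  refine this.congr_fderiv ?_
  refine ContinuousLinearMap.ext fun v => ?_
  simp only [ContinuousLinearMap.add_apply, ContinuousLinearMap.smul_apply, ContinuousLinearMap.neg_apply, smul_eq_mul]
  ring

lemma eventually_ne (p x : E3) (h : x ≠ p) : ∀ᶠ y in 𝓝 x, y ≠ p :=
  IsOpen.eventually_mem isOpen_ne h

lemma fderiv_barG_apply (p x : E3) (h : x ≠ p) (i : Fin 3) :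
    fderiv ℝ (barG p i) x (EuclideanSpace.single i 1)
      = -(qf p x ^ (-(3:ℝ)/2)) + 3 * (x i - p i)^2 * qf p x ^ (-(5:ℝ)/2) := by
  rw [(hasFDerivAt_barG p x h i).fderiv]
  simp [Dq_apply, PiLp.proj_apply, EuclideanSpace.single_apply]
  ring

/-- The key second-derivative computation: the barrier is harmonic away from p. -/
lemma sum_fderiv_barG (p x : E3) (h : x ≠ p) :
    ∑ i : Fin 3, fderiv ℝ (barG p i) x (EuclideanSpace.single i 1) = 0 := by
  have hq : (0:ℝ) < qf p x := qf_pos p x h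
  rw [Finset.sum_congr rfl (fun i _ => fderiv_barG_apply p x h i)]
  rw [Finset.sum_add_distrib]
  have h1 : ∑ _i : Fin 3, -(qf p x ^ (-(3:ℝ)/2)) = -3 * qf p x ^ (-(3:ℝ)/2) := by
    rw [Finset.sum_const]
    simp
  have h2 : ∑ i : Fin 3, 3 * (x i - p i)^2 * qf p x ^ (-(5:ℝ)/2)
      = 3 * qf p x * qf p x ^ (-(5:ℝ)/2) := by
    rw [← Finset.sum_mul, ← Finset.mul_sum]
    rw [show (∑ i : Fin 3, (x i - p i)^2) = qf p x from rfl]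
  rw [h1, h2]
  have h3 : qf p x * qf p x ^ (-(5:ℝ)/2) = qf p x ^ (-(3:ℝ)/2) := by
    nth_rewrite 1 [← Real.rpow_one (qf p x)]
    rw [← Real.rpow_add hq]
    norm_num
  rw [mul_assoc, h3]
  ring

lemma Lbar_apply (p y : E3) (i : Fin 3) :
    ((-(1:ℝ)/2 * qf p y ^ (-(3:ℝ)/2)) • Dq p y) (EuclideanSpace.single i 1) = barG p i y := by
  rw [ContinuousLinearMap.smul_apply, Dq_apply]
  simp [barG]
  ring

/-- quadratic function with laplacian 6 -/
def quad (x : E3) : ℝ := ∑ i, (x i)^2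

lemma quad_eq_norm (x : E3) : quad x = ‖x‖^2 := by
  rw [EuclideanSpace.norm_eq, Real.sq_sqrt (by positivity)]
  simp [quad, sq_abs]

lemma hasFDerivAt_quad (x : E3) : HasFDerivAt quad (Dq 0 x) x := by
  have := hasFDerivAt_qf 0 x
  have heq : qf 0 = quad := by funext y; simp [qf, quad]
  rwa [heq] at this

lemma lap_quad (x : E3) :
    ∑ i : Fin 3, fderiv ℝ (fun y => fderiv ℝ quad y (EuclideanSpace.single i 1)) x
      (EuclideanSpace.single i 1) = 6 := by
  have hstep : ∀ i : Fin 3,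
      fderiv ℝ (fun y => fderiv ℝ quad y (EuclideanSpace.single i 1)) x
        (EuclideanSpace.single i 1) = 2 := by
    intro i
    have hev : (fun y => fderiv ℝ quad y (EuclideanSpace.single i 1))
        = fun y => 2 * (EuclideanSpace.proj i : E3 →L[ℝ] ℝ) y := by
      funext y
      rw [(hasFDerivAt_quad y).fderiv, Dq_apply]
      simp [PiLp.proj_apply]
    rw [hev]
    have hd : HasFDerivAt (fun y : E3 => 2 * (EuclideanSpace.proj i : E3 →L[ℝ] ℝ) y)
        ((2:ℝ) • (EuclideanSpace.proj i : E3 →L[ℝ] ℝ)) x :=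
      ((EuclideanSpace.proj i : E3 →L[ℝ] ℝ).hasFDerivAt).const_mul 2
    rw [hd.fderiv]
    simp [PiLp.proj_apply, EuclideanSpace.single_apply]
  rw [Finset.sum_congr rfl (fun i _ => hstep i)]
  simp
  norm_num


/-- Second derivative test: at an interior max, directional second derivative is ≤ 0. -/
theorem secondDir_nonpos {φ : E3 → ℝ} {U : Set E3} (hU : IsOpen U) {a v : E3} (ha : a ∈ U)
    (hφ : DifferentiableOn ℝ φ U)
    (hg : DifferentiableAt ℝ (fun y => fderiv ℝ φ y v) a)
    (hmax : IsMaxOn φ U a) :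
    fderiv ℝ (fun y => fderiv ℝ φ y v) a v ≤ 0 := by
  by_contra hc
  push_neg at hc
  set g : E3 → ℝ := fun y => fderiv ℝ φ y v with hgdef
  set c : ℝ := fderiv ℝ g a v with hcdef
  have hga : g a = 0 := by
    have hloc : IsLocalMax φ a := hmax.isLocalMax (hU.mem_nhds ha)
    simp [hgdef, hloc.fderiv_eq_zero]
  -- ψ s = g (a + s • v), has derivative c at 0
  set ψ : ℝ → ℝ := fun s => g (a + s • v) with hψdef
  have hline : ∀ s : ℝ, HasDerivAt (fun t : ℝ => a + t • v) v s := by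
    intro s
    simpa using ((hasDerivAt_id s).smul_const v).const_add a
  have hψd : HasDerivAt ψ c 0 := by
    have h0 : HasFDerivAt g (fderiv ℝ g a) (a + (0:ℝ) • v) := by
      simpa using hg.hasFDerivAt
    have := h0.comp_hasDerivAt 0 (hline 0)
    simpa [hψdef, hcdef, Function.comp_def] using this
  have hslope : Tendsto (slope ψ 0) (𝓝[≠] (0:ℝ)) (𝓝 c) :=
    hasDerivAt_iff_tendsto_slope.1 hψd
  have hpos : ∀ᶠ s in 𝓝[>] (0:ℝ), 0 < ψ s := by
    have h1 : ∀ᶠ s in 𝓝[≠] (0:ℝ), 0 < slope ψ 0 s :=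
      hslope.eventually (eventually_gt_nhds hc)
    have h2 : ∀ᶠ s in 𝓝[>] (0:ℝ), 0 < slope ψ 0 s :=
      h1.filter_mono (nhdsWithin_mono _ (fun s hs => ne_of_gt hs))
    filter_upwards [h2, self_mem_nhdsWithin] with s hs hs0
    have : slope ψ 0 s = ψ s / s := by
      simp [slope_def_field, hψdef, hga]
    rw [this] at hs
    have := mul_pos hs (hs0 : (0:ℝ) < s)
    rwa [div_mul_cancel₀] at this
    exact ne_of_gt hs0
  -- find t > 0 with [0,t] mapped into U and ψ > 0 on (0,t)
  have hUline : ∀ᶠ s in 𝓝 (0:ℝ), a + s • v ∈ U := by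
    have hcont : Continuous (fun s : ℝ => a + s • v) := continuous_const.add (continuous_id.smul continuous_const)
    have : (fun s : ℝ => a + s • v) ⁻¹' U ∈ 𝓝 (0:ℝ) := by
      apply (hU.preimage hcont).mem_nhds; simpa using ha
    exact this
  obtain ⟨δ₁, hδ₁, hδ₁U⟩ := Metric.eventually_nhds_iff.1 hUline
  obtain ⟨u, hu, huψ⟩ := mem_nhdsGT_iff_exists_Ioo_subset.1 hpos
  set t : ℝ := min δ₁ u / 2 with htdef
  have ht : 0 < t := half_pos (lt_min hδ₁ hu)
  have htδ₁ : t < δ₁ := by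
    have := min_le_left δ₁ u; simp only [htdef]; linarith
  have htu : t < u := by
    have := min_le_right δ₁ u; simp only [htdef]; linarith
  have hmem : ∀ s ∈ Icc (0:ℝ) t, a + s • v ∈ U := by
    intro s hs
    apply hδ₁U
    rw [Real.dist_eq, sub_zero, abs_of_nonneg hs.1]
    exact lt_of_le_of_lt hs.2 htδ₁
  set θ : ℝ → ℝ := fun s => φ (a + s • v) with hθdef
  have hθmono : StrictMonoOn θ (Icc 0 t) := by
    apply strictMonoOn_of_deriv_pos (convex_Icc 0 t)
    · apply (hφ.continuousOn).comp (Continuous.continuousOn (continuous_const.add (continuous_id.smul continuous_const)))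
      intro s hs; exact hmem s hs
    · intro s hs
      rw [interior_Icc] at hs
      have hd : HasDerivAt θ (ψ s) s := by
        have hdφ : DifferentiableAt ℝ φ (a + s • v) :=
          hφ.differentiableAt (hU.mem_nhds (hmem s ⟨le_of_lt hs.1, le_of_lt hs.2⟩))
        have := hdφ.hasFDerivAt.comp_hasDerivAt s (hline s)
        simpa [hθdef, hψdef, hgdef, Function.comp_def] using this
      rw [hd.deriv]
      exact (huψ ⟨hs.1, lt_trans hs.2 htu⟩ : _)
  have h1 : θ 0 < θ t := hθmono (left_mem_Icc.2 (le_of_lt ht)) (right_mem_Icc.2 (le_of_lt ht)) ht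
  have h2 : θ t ≤ θ 0 := by
    have := hmax (hmem t (right_mem_Icc.2 (le_of_lt ht)))
    simpa [hθdef] using this
  linarith

end

open MeasureTheory Filter Topology Set

/-- The Euclidean Laplacian of a function on ℝ³. -/
noncomputable def laplacian (f : EuclideanSpace ℝ (Fin 3) → ℝ)
    (x : EuclideanSpace ℝ (Fin 3)) : ℝ :=
  ∑ i : Fin 3, fderiv ℝ (fun y => fderiv ℝ f y (EuclideanSpace.single i 1)) x
    (EuclideanSpace.single i 1)

/-- A nonnegative bounded subharmonic function on the complement of the z-axis Γ,
tending to 0 at infinity and extending continuously by 0 to Γ minus finitely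
many points, vanishes identically. -/
theorem subharmonic_vanishes
    (f : EuclideanSpace ℝ (Fin 3) → ℝ)
    (Γ : Set (EuclideanSpace ℝ (Fin 3)))
    (hΓ : Γ = {x | x 0 = 0 ∧ x 1 = 0})
    (P : Set (EuclideanSpace ℝ (Fin 3))) (hP : P.Finite) (hPΓ : P ⊆ Γ)
    (hsmooth : ContDiffOn ℝ 2 f Γᶜ)
    (hnonneg : ∀ x ∈ Γᶜ, 0 ≤ f x)
    (hsub : ∀ x ∈ Γᶜ, 0 ≤ laplacian f x)
    (hbdd : ∃ C : ℝ, ∀ x ∈ Γᶜ, f x ≤ C)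
    (hinf : Tendsto f (Filter.comap norm Filter.atTop ⊓ Filter.principal Γᶜ) (𝓝 0))
    (haxis : ∀ z ∈ Γ \ P, Tendsto f (nhdsWithin z Γᶜ) (𝓝 0)) :
    ∀ x ∈ Γᶜ, f x = 0 := by
  obtain ⟨C, hC⟩ := hbdd
  have hΓopen : IsOpen Γᶜ := by
    rw [hΓ]
    have h0 : IsClosed {x : EuclideanSpace ℝ (Fin 3) | x 0 = 0 ∧ x 1 = 0} := by
      have heq : {x : EuclideanSpace ℝ (Fin 3) | x 0 = 0 ∧ x 1 = 0} =
          (⇑(EuclideanSpace.proj (0 : Fin 3) : EuclideanSpace ℝ (Fin 3) →L[ℝ] ℝ)) ⁻¹' {0} ∩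
          (⇑(EuclideanSpace.proj (1 : Fin 3) : EuclideanSpace ℝ (Fin 3) →L[ℝ] ℝ)) ⁻¹' {0} := rfl
      rw [heq]
      exact (isClosed_singleton.preimage
          (EuclideanSpace.proj (0 : Fin 3)).continuous).inter
        (isClosed_singleton.preimage (EuclideanSpace.proj (1 : Fin 3)).continuous)
    exact h0.isOpen_compl
  set s : Finset (EuclideanSpace ℝ (Fin 3)) := hP.toFinset with hsdef
  set B : EuclideanSpace ℝ (Fin 3) → ℝ := fun x => ∑ p ∈ s, bar p x with hBdef
  have hBnonneg : ∀ x, 0 ≤ B x := fun x => Finset.sum_nonneg fun p _ => bar_nonneg p x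
  have hPx : ∀ x ∈ Γᶜ, ∀ p ∈ s, x ≠ p := by
    intro x hx p hp he
    exact hx (he ▸ hPΓ (hP.mem_toFinset.1 hp))
  have hfd : DifferentiableOn ℝ f Γᶜ := hsmooth.differentiableOn (by norm_num)
  have hfC1 : ContDiffOn ℝ 1 (fun y => fderiv ℝ f y) Γᶜ :=
    hsmooth.fderiv_of_isOpen hΓopen (by norm_num)
  have hFf : ∀ i : Fin 3, DifferentiableOn ℝ
      (fun y => fderiv ℝ f y (EuclideanSpace.single i 1)) Γᶜ := by
    intro i
    have hcomp := (ContinuousLinearMap.apply ℝ ℝ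
      (EuclideanSpace.single i (1:ℝ) : EuclideanSpace ℝ (Fin 3))).contDiff.comp_contDiffOn hfC1
    exact hcomp.differentiableOn one_ne_zero
  intro x₀ hx₀
  have hkey : ∀ ε : ℝ, 0 < ε → f x₀ ≤ ε * (1 + B x₀) := by
    intro ε hε
    -- find R beyond which f < ε
    have hev : ∀ᶠ x in Filter.comap norm Filter.atTop ⊓ Filter.principal Γᶜ, f x < ε :=
      hinf.eventually (eventually_lt_nhds hε)
    rw [Filter.eventually_inf_principal] at hev
    rw [Filter.eventually_comap] at hev
    obtain ⟨R₀, hR₀⟩ := Filter.eventually_atTop.1 hev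
    set R : ℝ := max R₀ (‖x₀‖ + 1) with hRdef
    have hRx₀ : ‖x₀‖ < R := lt_of_lt_of_le (lt_add_one _) (le_max_right _ _)
    have hRpos : 0 < R := lt_of_le_of_lt (norm_nonneg x₀) hRx₀
    have hRprop : ∀ x ∈ Γᶜ, R ≤ ‖x‖ → f x < ε := fun x hx hge =>
      hR₀ ‖x‖ (le_trans (le_max_left _ _) hge) x rfl hx
    have key2 : ∀ δ : ℝ, 0 < δ →
        f x₀ - ε * B x₀ + δ * quad x₀ ≤ ε + δ * R^2 := by
      intro δ hδ
      set W : EuclideanSpace ℝ (Fin 3) → ℝ := fun x => f x - ε * B x + δ * quad x with hWdef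
      by_contra hcon
      push_neg at hcon
      set c : ℝ := W x₀ with hcdef
      have hcon' : ε + δ * R^2 < c := hcon
      set T : Set (EuclideanSpace ℝ (Fin 3)) :=
        {x | x ∈ Γᶜ ∧ ‖x‖ ≤ R ∧ c ≤ W x} with hTdef
      have hTsub : T ⊆ Metric.closedBall 0 R := fun x hx => mem_closedBall_zero_iff.2 hx.2.1
      have hTΓ : T ⊆ Γᶜ := fun x hx => hx.1
      have hx₀T : x₀ ∈ T := ⟨hx₀, le_of_lt hRx₀, le_refl c⟩
      have hBdiff : ∀ x ∈ Γᶜ, HasFDerivAt B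
          (∑ p ∈ s, (-(1:ℝ)/2 * qf p x ^ (-(3:ℝ)/2)) • Dq p x) x := fun x hx =>
        HasFDerivAt.fun_sum fun p hp => hasFDerivAt_bar p x (hPx x hx p hp)
      have hWdiffAt : ∀ x ∈ Γᶜ, HasFDerivAt W
          (fderiv ℝ f x - ε • (∑ p ∈ s, (-(1:ℝ)/2 * qf p x ^ (-(3:ℝ)/2)) • Dq p x)
            + δ • Dq 0 x) x := by
        intro x hx
        exact (((hfd.differentiableAt (hΓopen.mem_nhds hx)).hasFDerivAt).sub
          ((hBdiff x hx).const_mul ε)).add ((hasFDerivAt_quad x).const_mul δ)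
      have hWcont : ∀ x ∈ Γᶜ, ContinuousAt W x := fun x hx =>
        (hWdiffAt x hx).differentiableAt.continuousAt
      have hquadle : ∀ x : EuclideanSpace ℝ (Fin 3), ‖x‖ ≤ R → quad x ≤ R^2 := by
        intro x hx
        rw [quad_eq_norm]
        exact pow_le_pow_left₀ (norm_nonneg x) hx 2
      have hTclosed : IsClosed T := by
        apply isClosed_of_closure_subset
        intro z hz
        have hzball : ‖z‖ ≤ R := mem_closedBall_zero_iff.1
          (closure_minimal hTsub Metric.isClosed_closedBall hz)
        haveI hzne : (𝓝[T] z).NeBot := mem_closure_iff_nhdsWithin_neBot.1 hz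
        by_cases hzΓ : z ∈ Γ
        · exfalso
          by_cases hzP : z ∈ P
          · -- barrier blows up at z
            have hzs : z ∈ s := hP.mem_toFinset.2 hzP
            set M : ℝ := (C + δ * R^2 - c) / ε with hMdef
            have hbarle : ∀ x ∈ T, bar z x ≤ M := by
              intro x hx
              have h1 : c ≤ W x := hx.2.2
              have h2 : f x ≤ C := hC x hx.1
              have h3 : quad x ≤ R^2 := hquadle x hx.2.1
              have h4 : bar z x ≤ B x := Finset.single_le_sum
                (fun p _ => bar_nonneg p x) hzs
              have h5 : ε * bar z x ≤ ε * B x := mul_le_mul_of_nonneg_left h4 hε.le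
              have h6 : W x = f x - ε * B x + δ * quad x := rfl
              rw [hMdef, le_div_iff₀ hε]
              nlinarith
            have hx₀z : x₀ ≠ z := fun he => hx₀ (he ▸ hzΓ)
            have hMpos : 0 < M := lt_of_lt_of_le (bar_pos z x₀ hx₀z) (hbarle x₀ hx₀T)
            obtain ⟨x, hxT, hxd⟩ := Metric.mem_closure_iff.1 hz M⁻¹ (inv_pos.2 hMpos)
            have hxz : x ≠ z := fun he => hxT.1 (he ▸ hzΓ)
            have h5 : ‖x - z‖⁻¹ ≤ M := by
              rw [← bar_eq_inv]; exact hbarle x hxT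
            have h6 : 0 < ‖x - z‖ := norm_pos_iff.2 (sub_ne_zero_of_ne hxz)
            have h7 : M⁻¹ ≤ ‖x - z‖ := by
              have h8 : 1 ≤ M * ‖x - z‖ := by
                calc (1:ℝ) = ‖x - z‖⁻¹ * ‖x - z‖ := (inv_mul_cancel₀ (ne_of_gt h6)).symm
                _ ≤ M * ‖x - z‖ := mul_le_mul_of_nonneg_right h5 h6.le
              rw [inv_eq_one_div, div_le_iff₀ hMpos]
              linarith
            have hd : dist z x = ‖x - z‖ := by rw [dist_eq_norm, norm_sub_rev]
            rw [hd] at hxd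
            linarith
          · -- f tends to 0 at z
            have hf0 : Tendsto f (𝓝[T] z) (𝓝 0) :=
              (haxis z ⟨hzΓ, hzP⟩).mono_left (nhdsWithin_mono z hTΓ)
            have hcpos : (0:ℝ) < c - δ * R^2 := by nlinarith
            have hev2 : ∀ᶠ x in 𝓝[T] z, f x < c - δ * R^2 :=
              hf0.eventually (eventually_lt_nhds hcpos)
            obtain ⟨x, hx1, hx2⟩ := (hev2.and self_mem_nhdsWithin).exists
            have h1 : c ≤ W x := hx2.2.2
            have h3 : quad x ≤ R^2 := hquadle x hx2.2.1
            have h6 : W x = f x - ε * B x + δ * quad x := rfl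
            nlinarith [mul_nonneg hε.le (hBnonneg x)]
        · -- z outside the axis: T is locally closed there
          have hzΓc : z ∈ Γᶜ := hzΓ
          refine ⟨hzΓc, hzball, ?_⟩
          have hWc : Tendsto W (𝓝[T] z) (𝓝 (W z)) :=
            ((hWcont z hzΓc).continuousWithinAt : ContinuousWithinAt W T z)
          have hev4 : ∀ᶠ x in 𝓝[T] z, c ≤ W x := by
            filter_upwards [self_mem_nhdsWithin] with x hx using hx.2.2
          exact ge_of_tendsto hWc hev4
      have hTcompact : IsCompact T :=
        (isCompact_closedBall (0 : EuclideanSpace ℝ (Fin 3)) R).of_isClosed_subset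
          hTclosed hTsub
      obtain ⟨a, haT, hamax⟩ := hTcompact.exists_isMaxOn ⟨x₀, hx₀T⟩
        (fun x hx => (hWcont x (hTΓ hx)).continuousWithinAt)
      have haΓ : a ∈ Γᶜ := haT.1
      have hcWa : c ≤ W a := haT.2.2
      have haR : ‖a‖ < R := by
        rcases lt_or_eq_of_le haT.2.1 with h | h
        · exact h
        · exfalso
          have hfa : f a < ε := hRprop a haΓ (le_of_eq h.symm)
          have hq : quad a = R^2 := by rw [quad_eq_norm, h]
          have h6 : W a = f a - ε * B a + δ * quad a := rfl
          nlinarith [mul_nonneg hε.le (hBnonneg a)]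
      set U : Set (EuclideanSpace ℝ (Fin 3)) := Γᶜ ∩ Metric.ball 0 R with hUdef
      have hUopen : IsOpen U := hΓopen.inter Metric.isOpen_ball
      have haU : a ∈ U := ⟨haΓ, mem_ball_zero_iff.2 haR⟩
      have hUmax : IsMaxOn W U a := by
        rw [isMaxOn_iff]
        intro x hx
        by_cases hcx : c ≤ W x
        · exact isMaxOn_iff.1 hamax x ⟨hx.1, le_of_lt (mem_ball_zero_iff.1 hx.2), hcx⟩
        · push_neg at hcx
          exact le_trans hcx.le hcWa
      have hWdiffU : DifferentiableOn ℝ W U := fun x hx =>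
        ((hWdiffAt x hx.1).differentiableAt).differentiableWithinAt
      -- pointwise identity for the directional derivative functions
      set Φ : Fin 3 → EuclideanSpace ℝ (Fin 3) → ℝ := fun i y =>
        fderiv ℝ f y (EuclideanSpace.single i 1) - ε * (∑ p ∈ s, barG p i y)
          + δ * (2 * y i) with hΦdef
      have hev3 : ∀ i : Fin 3,
          (fun y => fderiv ℝ W y (EuclideanSpace.single i 1)) =ᶠ[𝓝 a] Φ i := by
        intro i
        filter_upwards [hΓopen.mem_nhds haΓ] with y hy
        rw [(hWdiffAt y hy).fderiv]
        have hDB : (∑ p ∈ s, (-(1:ℝ)/2 * qf p y ^ (-(3:ℝ)/2)) • Dq p y)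
            (EuclideanSpace.single i 1) = ∑ p ∈ s, barG p i y := by
          rw [ContinuousLinearMap.sum_apply]
          exact Finset.sum_congr rfl fun p _ => Lbar_apply p y i
        rw [ContinuousLinearMap.add_apply, ContinuousLinearMap.sub_apply,
          ContinuousLinearMap.smul_apply, ContinuousLinearMap.smul_apply, hDB, Dq_apply]
        simp [hΦdef]
      have hΦd : ∀ i : Fin 3, HasFDerivAt (Φ i)
          ((fderiv ℝ (fun y => fderiv ℝ f y (EuclideanSpace.single i 1)) a
              - ε • (∑ p ∈ s,
                ((-(qf p a ^ (-(3:ℝ)/2))) • (EuclideanSpace.proj i :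
                    EuclideanSpace ℝ (Fin 3) →L[ℝ] ℝ)
                  + (-(a i - p i) * (-(3:ℝ)/2 * qf p a ^ (-(5:ℝ)/2))) • Dq p a)))
            + δ • ((2:ℝ) • (EuclideanSpace.proj i :
                EuclideanSpace ℝ (Fin 3) →L[ℝ] ℝ))) a := by
        intro i
        have hFfa : DifferentiableAt ℝ
            (fun y => fderiv ℝ f y (EuclideanSpace.single i 1)) a :=
          (hFf i).differentiableAt (hΓopen.mem_nhds haΓ)
        have hGBa : HasFDerivAt (fun y => ∑ p ∈ s, barG p i y)
            (∑ p ∈ s, ((-(qf p a ^ (-(3:ℝ)/2))) • (EuclideanSpace.proj i :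
                EuclideanSpace ℝ (Fin 3) →L[ℝ] ℝ)
              + (-(a i - p i) * (-(3:ℝ)/2 * qf p a ^ (-(5:ℝ)/2))) • Dq p a)) a :=
          HasFDerivAt.fun_sum fun p hp => hasFDerivAt_barG p a (hPx a haΓ p hp) i
        have hlin : HasFDerivAt (fun y : EuclideanSpace ℝ (Fin 3) => 2 * y i)
            ((2:ℝ) • (EuclideanSpace.proj i :
              EuclideanSpace ℝ (Fin 3) →L[ℝ] ℝ)) a :=
          (EuclideanSpace.proj i : EuclideanSpace ℝ (Fin 3) →L[ℝ] ℝ).hasFDerivAt.const_mul 2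
        exact ((hFfa.hasFDerivAt).sub (hGBa.const_mul ε)).add (hlin.const_mul δ)
      have hsum_le : ∑ i : Fin 3,
          fderiv ℝ (fun y => fderiv ℝ W y (EuclideanSpace.single i 1)) a
            (EuclideanSpace.single i 1) ≤ 0 := by
        apply Finset.sum_nonpos
        intro i _
        apply secondDir_nonpos hUopen haU hWdiffU _ hUmax
        exact (hev3 i).differentiableAt_iff.2 (hΦd i).differentiableAt
      have hval : ∀ i : Fin 3,
          fderiv ℝ (fun y => fderiv ℝ W y (EuclideanSpace.single i 1)) a
            (EuclideanSpace.single i 1)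
          = fderiv ℝ (fun y => fderiv ℝ f y (EuclideanSpace.single i 1)) a
              (EuclideanSpace.single i 1)
            - ε * (∑ p ∈ s, fderiv ℝ (barG p i) a (EuclideanSpace.single i 1))
            + δ * 2 := by
        intro i
        rw [(hev3 i).fderiv_eq, (hΦd i).fderiv]
        rw [ContinuousLinearMap.add_apply, ContinuousLinearMap.sub_apply,
          ContinuousLinearMap.smul_apply, ContinuousLinearMap.smul_apply,
          ContinuousLinearMap.sum_apply]
        have hterm : ∀ p ∈ s,
            ((-(qf p a ^ (-(3:ℝ)/2))) • (EuclideanSpace.proj i :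
                EuclideanSpace ℝ (Fin 3) →L[ℝ] ℝ)
              + (-(a i - p i) * (-(3:ℝ)/2 * qf p a ^ (-(5:ℝ)/2))) • Dq p a)
              (EuclideanSpace.single i 1)
            = fderiv ℝ (barG p i) a (EuclideanSpace.single i 1) := by
          intro p hp
          rw [(hasFDerivAt_barG p a (hPx a haΓ p hp) i).fderiv]
        rw [Finset.sum_congr rfl hterm]
        have hproj : (EuclideanSpace.proj i : EuclideanSpace ℝ (Fin 3) →L[ℝ] ℝ)
            (EuclideanSpace.single i 1) = 1 := by
          simp [PiLp.proj_apply, EuclideanSpace.single_apply]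
        rw [ContinuousLinearMap.smul_apply, hproj]
        simp only [smul_eq_mul]
        ring
      have hzero : ∑ i : Fin 3,
          fderiv ℝ (fun y => fderiv ℝ W y (EuclideanSpace.single i 1)) a
            (EuclideanSpace.single i 1) = laplacian f a + δ * 6 := by
        rw [Finset.sum_congr rfl (fun i _ => hval i)]
        rw [Finset.sum_add_distrib, Finset.sum_sub_distrib]
        have hswap : ∑ i : Fin 3, ε * (∑ p ∈ s, fderiv ℝ (barG p i) a
            (EuclideanSpace.single i 1)) = 0 := by
          rw [← Finset.mul_sum, Finset.sum_comm]
          have : ∀ p ∈ s, ∑ i : Fin 3, fderiv ℝ (barG p i) a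
              (EuclideanSpace.single i 1) = 0 := fun p hp =>
            sum_fderiv_barG p a (hPx a haΓ p hp)
          rw [Finset.sum_congr rfl this]
          simp
        rw [hswap]
        have hconst : ∑ _i : Fin 3, δ * 2 = δ * 6 := by
          rw [Finset.sum_const]
          simp
          ring
        rw [hconst, laplacian]
        ring
      have hlap : 0 ≤ laplacian f a := hsub a haΓ
      rw [hzero] at hsum_le
      linarith
    -- let δ → 0
    have h9 : f x₀ - ε * B x₀ ≤ ε := by
      apply le_of_forall_pos_le_add
      intro η hη
      have hδ : 0 < η / R^2 := by positivity
      have := key2 (η / R^2) hδ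
      have hq0 : 0 ≤ quad x₀ := by rw [quad_eq_norm]; positivity
      have hR2 : η / R^2 * R^2 = η := by field_simp
      nlinarith
    nlinarith [hBnonneg x₀]
  -- let ε → 0
  have hfle : f x₀ ≤ 0 := by
    by_contra hpos
    push_neg at hpos
    have hKpos : (0:ℝ) < 1 + B x₀ := by linarith [hBnonneg x₀]
    have h10 := hkey (f x₀ / (2 * (1 + B x₀))) (div_pos hpos (by linarith))
    have heq : f x₀ / (2 * (1 + B x₀)) * (1 + B x₀) = f x₀ / 2 := by
      field_simp
    rw [heq] at h10
    linarith
  exact le_antisymm hfle (hnonneg x₀ hx₀)
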